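/- arXiv:2107.05711 — 4 statements merged into one kernel-verified Lean document; each statement's English description precedes it below -/
import Mathlib

section
/- The family W = {(W_i, v_i)}_{i∈I} is a (C,C')-controlled Bessel fusion sequence for H (i.e., there exists B > 0 with Σ_{i∈I} v_i² ‖(C*π_{W_i}C')^{1/2} f‖² ≤ B‖f‖² for all f ∈ H) if and only if for every f ∈ H the series Σ_{i∈I} v_i² C*π_{W_i}C' f converges in H. -/
open ContinuousLinearMap

/-- The controlled operator `C* ∘ π_W ∘ C'`. -/
noncomputable def ctrlOp {H : Type*} [NormedAddCommGroup H] [InnerProductSpace ℂ H]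
    [CompleteSpace H] (C C' : H →L[ℂ] H) (W : Submodule ℂ H) [CompleteSpace W] :
    H →L[ℂ] H :=
  ContinuousLinearMap.adjoint C ∘L ((W.subtypeL ∘L W.orthogonalProjectionOnto) ∘L C')

/-- `{(W i, v i)}` is a `(C,C')`-controlled Bessel fusion sequence for `H`
iff for every `f ∈ H` the series `∑ i, v i ^ 2 • (C* π_{W i} C') f` converges in `H`. -/
theorem stmt_3 {H : Type*} [NormedAddCommGroup H] [InnerProductSpace ℂ H] [CompleteSpace H]
    {ι : Type*} [Countable ι]
    (C C' : H →L[ℂ] H) (hC : IsUnit C) (hC' : IsUnit C')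
    (W : ι → Submodule ℂ H) [∀ i, CompleteSpace (W i)]
    (v : ι → ℝ) (hv : ∀ i, 0 < v i)
    (sq : ι → H →L[ℂ] H)
    (hGpos : ∀ i, (ctrlOp C C' (W i)).IsPositive)
    (hsq_pos : ∀ i, (sq i).IsPositive)
    (hsq_sq : ∀ i, sq i ∘L sq i = ctrlOp C C' (W i)) :
    (∃ B : ℝ, 0 < B ∧ ∀ f : H,
        Summable (fun i => v i ^ 2 * ‖sq i f‖ ^ 2) ∧
        (∑' i, v i ^ 2 * ‖sq i f‖ ^ 2) ≤ B * ‖f‖ ^ 2) ↔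
    (∀ f : H, Summable (fun i => (v i ^ 2) • ctrlOp C C' (W i) f)) := by
  set G : ι → H →L[ℂ] H := fun i => ctrlOp C C' (W i) with hGdef
  have hsa : ∀ i, ContinuousLinearMap.adjoint (sq i) = sq i := fun i =>
    ContinuousLinearMap.isSelfAdjoint_iff'.mp (hsq_pos i).isSelfAdjoint
  have hGi : ∀ i (x : H), G i x = sq i (sq i x) := by
    intro i x
    have := congrFun (congrArg DFunLike.coe (hsq_sq i)) x
    simpa [hGdef] using this.symm
  -- key identities
  have key : ∀ i (x y : H), (inner ℂ (G i x) y : ℂ) = inner ℂ (sq i x) (sq i y) := by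
    intro i x y
    rw [hGi i x, ← ContinuousLinearMap.adjoint_inner_left, hsa i]
  have key2 : ∀ i (x y : H), (inner ℂ x (G i y) : ℂ) = inner ℂ (sq i x) (sq i y) := by
    intro i x y
    rw [hGi i y, ← ContinuousLinearMap.adjoint_inner_right, hsa i]
  -- real smul as complex smul
  have hrs : ∀ (r : ℝ) (x : H), r • x = (r : ℂ) • x := fun r x =>
    RCLike.real_smul_eq_coe_smul (K := ℂ) r x
  constructor
  · rintro ⟨B, hB, hbd⟩ f
    have hfin : ∀ (t : Finset ι) (g : H),
        (∑ i ∈ t, v i ^ 2 * ‖sq i g‖ ^ 2) ≤ B * ‖g‖ ^ 2 := fun t g =>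
      le_trans (Summable.sum_le_tsum t (fun i _ => by positivity) (hbd g).1) (hbd g).2
    have hnorm : ∀ t : Finset ι,
        ‖∑ i ∈ t, (v i ^ 2) • G i f‖ ^ 2 ≤ B * (∑ i ∈ t, v i ^ 2 * ‖sq i f‖ ^ 2) := by
      intro t
      set u := ∑ i ∈ t, (v i ^ 2) • G i f with hu
      have h1 : ‖u‖ ^ 2 = Complex.re (inner ℂ u u : ℂ) := by
        simpa using (inner_self_eq_norm_sq (𝕜 := ℂ) u).symm
      have h2 : (inner ℂ u u : ℂ) = ∑ i ∈ t, ((v i ^ 2 : ℝ) : ℂ) * inner ℂ (sq i f) (sq i u) := by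
        conv_lhs => rw [hu, sum_inner]
        refine Finset.sum_congr rfl fun i _ => ?_
        rw [hrs, inner_smul_left, key i f u, Complex.conj_ofReal]
      have h3 : ‖u‖ ^ 2 ≤ ∑ i ∈ t, (v i * ‖sq i f‖) * (v i * ‖sq i u‖) := by
        rw [h1, h2, Complex.re_sum]
        apply Finset.sum_le_sum
        intro i _
        have hterm : Complex.re (((v i ^ 2 : ℝ) : ℂ) * (inner ℂ (sq i f) (sq i u) : ℂ))
            = v i ^ 2 * Complex.re (inner ℂ (sq i f) (sq i u) : ℂ) :=
          Complex.re_ofReal_mul _ _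
        rw [hterm]
        have hre : Complex.re (inner ℂ (sq i f) (sq i u) : ℂ) ≤ ‖sq i f‖ * ‖sq i u‖ :=
          le_trans (Complex.re_le_norm _)
            (by simpa using norm_inner_le_norm (𝕜 := ℂ) (sq i f) (sq i u))
        nlinarith [sq_nonneg (v i), (hv i).le, norm_nonneg (sq i f), norm_nonneg (sq i u)]
      have hcs : (∑ i ∈ t, (v i * ‖sq i f‖) * (v i * ‖sq i u‖)) ^ 2
          ≤ (∑ i ∈ t, v i ^ 2 * ‖sq i f‖ ^ 2) * ∑ i ∈ t, v i ^ 2 * ‖sq i u‖ ^ 2 := by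
        calc (∑ i ∈ t, (v i * ‖sq i f‖) * (v i * ‖sq i u‖)) ^ 2
            ≤ (∑ i ∈ t, (v i * ‖sq i f‖) ^ 2) * ∑ i ∈ t, (v i * ‖sq i u‖) ^ 2 :=
              Finset.sum_mul_sq_le_sq_mul_sq t _ _
          _ = (∑ i ∈ t, v i ^ 2 * ‖sq i f‖ ^ 2) * ∑ i ∈ t, v i ^ 2 * ‖sq i u‖ ^ 2 := by
              simp_rw [mul_pow]
      have hu2 : (∑ i ∈ t, v i ^ 2 * ‖sq i u‖ ^ 2) ≤ B * ‖u‖ ^ 2 := hfin t u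
      have hSnn : 0 ≤ ∑ i ∈ t, v i ^ 2 * ‖sq i f‖ ^ 2 :=
        Finset.sum_nonneg fun i _ => by positivity
      have h3nn : 0 ≤ ∑ i ∈ t, (v i * ‖sq i f‖) * (v i * ‖sq i u‖) :=
        le_trans (sq_nonneg _) h3
      have hx4 : ‖u‖ ^ 2 * ‖u‖ ^ 2
          ≤ (B * (∑ i ∈ t, v i ^ 2 * ‖sq i f‖ ^ 2)) * ‖u‖ ^ 2 := by
        calc ‖u‖ ^ 2 * ‖u‖ ^ 2
            ≤ (∑ i ∈ t, (v i * ‖sq i f‖) * (v i * ‖sq i u‖))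
              * (∑ i ∈ t, (v i * ‖sq i f‖) * (v i * ‖sq i u‖)) :=
              mul_self_le_mul_self (sq_nonneg _) h3
          _ = (∑ i ∈ t, (v i * ‖sq i f‖) * (v i * ‖sq i u‖)) ^ 2 := by ring
          _ ≤ (∑ i ∈ t, v i ^ 2 * ‖sq i f‖ ^ 2) * ∑ i ∈ t, v i ^ 2 * ‖sq i u‖ ^ 2 := hcs
          _ ≤ (∑ i ∈ t, v i ^ 2 * ‖sq i f‖ ^ 2) * (B * ‖u‖ ^ 2) :=
              mul_le_mul_of_nonneg_left hu2 hSnn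
          _ = (B * (∑ i ∈ t, v i ^ 2 * ‖sq i f‖ ^ 2)) * ‖u‖ ^ 2 := by ring
      by_cases hz : ‖u‖ ^ 2 = 0
      · rw [hz]; positivity
      · exact le_of_mul_le_mul_right hx4 (lt_of_le_of_ne (sq_nonneg _) (Ne.symm hz))
    rw [summable_iff_vanishing]
    intro e he
    obtain ⟨ε, hε, hball⟩ := Metric.mem_nhds_iff.mp he
    obtain ⟨s, hs⟩ := (summable_iff_vanishing.mp (hbd f).1) (Metric.ball 0 (ε ^ 2 / B))
      (Metric.ball_mem_nhds 0 (by positivity))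
    refine ⟨s, fun t ht => ?_⟩
    apply hball
    have h1 := hs t ht
    rw [Metric.mem_ball, dist_zero_right, Real.norm_eq_abs] at h1
    have hSnn : 0 ≤ ∑ i ∈ t, v i ^ 2 * ‖sq i f‖ ^ 2 :=
      Finset.sum_nonneg fun i _ => by positivity
    have h2 : (∑ i ∈ t, v i ^ 2 * ‖sq i f‖ ^ 2) < ε ^ 2 / B := by
      rwa [abs_of_nonneg hSnn] at h1
    have h3 : ‖∑ i ∈ t, (v i ^ 2) • G i f‖ ^ 2 < ε ^ 2 := by
      calc ‖∑ i ∈ t, (v i ^ 2) • G i f‖ ^ 2 ≤ B * (∑ i ∈ t, v i ^ 2 * ‖sq i f‖ ^ 2) :=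
            hnorm t
        _ < B * (ε ^ 2 / B) := mul_lt_mul_of_pos_left h2 hB
        _ = ε ^ 2 := by field_simp
    rw [Metric.mem_ball, dist_zero_right]
    exact lt_of_pow_lt_pow_left₀ 2 hε.le h3
  · intro hconv
    have hmap_add : ∀ x y : H, (∑' i, (v i ^ 2) • G i (x + y))
        = (∑' i, (v i ^ 2) • G i x) + ∑' i, (v i ^ 2) • G i y := by
      intro x y
      rw [← Summable.tsum_add (hconv x) (hconv y)]
      congr 1; funext i; rw [map_add, smul_add]
    have hmap_smul : ∀ (c : ℂ) (x : H), (∑' i, (v i ^ 2) • G i (c • x))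
        = c • ∑' i, (v i ^ 2) • G i x := by
      intro c x
      rw [← Summable.tsum_const_smul c (hconv x)]
      congr 1; funext i; rw [map_smul]; exact smul_comm _ _ _
    set Slin : H →ₗ[ℂ] H :=
      { toFun := fun x => ∑' i, (v i ^ 2) • G i x
        map_add' := hmap_add
        map_smul' := hmap_smul } with hSlin
    have hSapp : ∀ x : H, Slin x = ∑' i, (v i ^ 2) • G i x := fun _ => rfl
    have hsymm : Slin.IsSymmetric := by
      intro x y
      have h1 : (inner ℂ y (Slin x) : ℂ) = ∑' i, (innerSL ℂ y) ((v i ^ 2) • G i x) := by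
        rw [hSapp]
        exact ContinuousLinearMap.map_tsum (innerSL ℂ y) (hconv x)
      have h2 : (inner ℂ x (Slin y) : ℂ) = ∑' i, (innerSL ℂ x) ((v i ^ 2) • G i y) := by
        rw [hSapp]
        exact ContinuousLinearMap.map_tsum (innerSL ℂ x) (hconv y)
      calc (inner ℂ (Slin x) y : ℂ)
          = (starRingEnd ℂ) (inner ℂ y (Slin x)) := (inner_conj_symm _ _).symm
        _ = Complex.conjCLE (∑' i, (innerSL ℂ y) ((v i ^ 2) • G i x)) := by
            rw [h1]; rfl
        _ = ∑' i, Complex.conjCLE ((innerSL ℂ y) ((v i ^ 2) • G i x)) :=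
            Complex.conjCLE.map_tsum
        _ = ∑' i, (innerSL ℂ x) ((v i ^ 2) • G i y) := by
            congr 1; funext i
            show (starRingEnd ℂ) (inner ℂ y ((v i ^ 2) • G i x)) = inner ℂ x ((v i ^ 2) • G i y)
            rw [inner_conj_symm, hrs, hrs, inner_smul_left, inner_smul_right,
              Complex.conj_ofReal, key i x y, key2 i x y]
        _ = (inner ℂ x (Slin y) : ℂ) := h2.symm
    have hcont : Continuous Slin := hsymm.continuous
    set Sc : H →L[ℂ] H := ⟨Slin, hcont⟩ with hSc
    refine ⟨‖Sc‖ + 1, by positivity, fun f => ?_⟩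
    have hterm : ∀ i, ((innerSL ℂ f) ((v i ^ 2) • G i f) : ℂ)
        = ((v i ^ 2 * ‖sq i f‖ ^ 2 : ℝ) : ℂ) := by
      intro i
      show (inner ℂ f ((v i ^ 2) • G i f) : ℂ) = _
      rw [hrs, inner_smul_right, key2 i f f, inner_self_eq_norm_sq_to_K]
      norm_cast
      exact (Complex.ofReal_mul _ _).symm
    have hsummC : Summable (fun i => ((innerSL ℂ f) ((v i ^ 2) • G i f) : ℂ)) :=
      ContinuousLinearMap.summable _ (hconv f)
    have hsumm : Summable (fun i => v i ^ 2 * ‖sq i f‖ ^ 2) := by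
      rw [← Complex.summable_ofReal]
      exact hsummC.congr fun i => (hterm i)
    refine ⟨hsumm, ?_⟩
    have heq : ((∑' i, v i ^ 2 * ‖sq i f‖ ^ 2 : ℝ) : ℂ) = inner ℂ f (Sc f) := by
      rw [Complex.ofReal_tsum]
      have h2 : (inner ℂ f (Sc f) : ℂ) = ∑' i, ((innerSL ℂ f) ((v i ^ 2) • G i f)) :=
        ContinuousLinearMap.map_tsum (innerSL ℂ f) (hconv f)
      rw [h2]
      exact tsum_congr fun i => (hterm i).symm
    have hre : (∑' i, v i ^ 2 * ‖sq i f‖ ^ 2) = Complex.re (inner ℂ f (Sc f) : ℂ) := by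
      rw [← heq]; simp
    rw [hre]
    calc Complex.re (inner ℂ f (Sc f) : ℂ) ≤ ‖(inner ℂ f (Sc f) : ℂ)‖ := Complex.re_le_norm _
      _ ≤ ‖f‖ * ‖Sc f‖ := norm_inner_le_norm _ _
      _ ≤ ‖f‖ * (‖Sc‖ * ‖f‖) := mul_le_mul_of_nonneg_left (Sc.le_opNorm f) (norm_nonneg f)
      _ ≤ (‖Sc‖ + 1) * ‖f‖ ^ 2 := by nlinarith [norm_nonneg f, norm_nonneg Sc]
end

section
/- Let W = {(W_i, v_i)}_{i∈I} be a (C,C')-controlled fusion frame for H with bounds A and B, and let J ⊆ I. If Σ_{i∈J} v_i² = B, then every f ∈ ⋂_{i∈J} M_i satisfies (C*π_{W_i}C')^{1/2} f = 0 for all i ∈ I∖J; that is, ⋂_{i∈J} M_i ⊆ ⋂_{i∈I∖J} ker (C*π_{W_i}C')^{1/2}. -/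
open ContinuousLinearMap

/-- If `{(W i, v i)}` is a `(C,C')`-controlled fusion frame with bounds `A, B`
and `J ⊆ I` satisfies `∑_{i ∈ J} v i ^ 2 = B`, then every `f` fixed by all
`(C* π_{W i} C')^{1/2}`, `i ∈ J`, is killed by `(C* π_{W i} C')^{1/2}` for all `i ∉ J`. -/
theorem stmt_5 {H : Type*} [NormedAddCommGroup H] [InnerProductSpace ℂ H] [CompleteSpace H]
    {ι : Type*} [Countable ι]
    (C C' : H →L[ℂ] H) (hC : IsUnit C) (hC' : IsUnit C')
    (W : ι → Submodule ℂ H) [∀ i, CompleteSpace (W i)]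
    (v : ι → ℝ) (hv : ∀ i, 0 < v i)
    (sq : ι → H →L[ℂ] H)
    (hGpos : ∀ i, (ctrlOp C C' (W i)).IsPositive)
    (hsq_pos : ∀ i, (sq i).IsPositive)
    (hsq_sq : ∀ i, sq i ∘L sq i = ctrlOp C C' (W i))
    (A B : ℝ) (hA : 0 < A) (hAB : A ≤ B)
    (hframe : ∀ f : H,
      Summable (fun i => v i ^ 2 * ‖sq i f‖ ^ 2) ∧
      A * ‖f‖ ^ 2 ≤ ∑' i, v i ^ 2 * ‖sq i f‖ ^ 2 ∧
      (∑' i, v i ^ 2 * ‖sq i f‖ ^ 2) ≤ B * ‖f‖ ^ 2)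
    (J : Set ι)
    (hJsum : Summable (fun i : J => v i ^ 2))
    (hJ : ∑' i : J, v i ^ 2 = B) :
    ∀ f : H, (∀ i ∈ J, sq i f = f) → ∀ i ∉ J, sq i f = 0 := by
  intro f hf i hi
  set g : ι → ℝ := fun i => v i ^ 2 * ‖sq i f‖ ^ 2 with hg
  have hgnn : ∀ j, 0 ≤ g j := fun j => by positivity
  obtain ⟨hsum, hlow, hup⟩ := hframe f
  -- sum over J equals B * ‖f‖^2
  have hJval : ∑' j : J, g j = B * ‖f‖ ^ 2 := by
    have : (fun j : J => g j) = fun j : J => v j ^ 2 * ‖f‖ ^ 2 := by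
      funext j; simp [hg, hf j j.2]
    rw [this, tsum_mul_right, hJ]
  have hsplit : ∑' j : J, g j + ∑' j : (Jᶜ : Set ι), g j = ∑' j, g j :=
    Summable.tsum_add_tsum_compl (hsum.subtype J) (hsum.subtype _)
  have hcompl : ∑' j : (Jᶜ : Set ι), g j ≤ 0 := by
    have := hup
    nlinarith [hsplit, hJval]
  have hcompl0 : ∑' j : (Jᶜ : Set ι), g j = 0 :=
    le_antisymm hcompl (tsum_nonneg (fun j => hgnn j))
  have hterm : g i ≤ 0 := by
    have := Summable.le_tsum (hsum.subtype (Jᶜ : Set ι)) (⟨i, hi⟩ : ↥(Jᶜ : Set ι))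
      (fun j _ => hgnn j.1)
    exact le_of_le_of_eq this hcompl0
  have hterm' : v i ^ 2 * ‖sq i f‖ ^ 2 ≤ 0 := hterm
  have hv2 : 0 < v i ^ 2 := pow_pos (hv i) 2
  have : ‖sq i f‖ ^ 2 = 0 := by
    nlinarith [hterm', hv2, sq_nonneg ‖sq i f‖]
  simpa [norm_eq_zero] using pow_eq_zero_iff (n := 2) (by norm_num) |>.mp this
end

section
/- Let W = {(W_i, v_i)}_{i∈I} be a (C,C')-controlled fusion frame for H with bounds A and B. If there exists i₀ ∈ I such that v_{i₀}² ‖C*π_{W_{i₀}}C'‖ < A, then {(W_i, v_i)}_{i∈I, i≠i₀} is a (C,C')-controlled fusion frame for H with bounds A − v_{i₀}² ‖C*π_{W_{i₀}}C'‖ and B. -/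
open ContinuousLinearMap

/-- For a self-adjoint operator `T`, `‖T f‖² ≤ ‖T²‖ ‖f‖²`. -/
theorem stmt7_keylem {H : Type*} [NormedAddCommGroup H] [InnerProductSpace ℂ H] [CompleteSpace H]
    (T : H →L[ℂ] H) (hT : IsSelfAdjoint T) (f : H) :
    ‖T f‖ ^ 2 ≤ ‖T ∘L T‖ * ‖f‖ ^ 2 := by
  have h1 : (inner ℂ (T f) (T f) : ℂ) = inner ℂ ((T ∘L T) f) f := by
    calc (inner ℂ (T f) (T f) : ℂ) = inner ℂ (T f) ((adjoint T) f) := by rw [hT.adjoint_eq]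
      _ = inner ℂ (T (T f)) f := adjoint_inner_right T (T f) f
      _ = inner ℂ ((T ∘L T) f) f := rfl
  have h2 : ‖T f‖ ^ 2 = RCLike.re (inner ℂ (T f) (T f) : ℂ) := (inner_self_eq_norm_sq _).symm
  rw [h2, h1]
  calc RCLike.re (inner ℂ ((T ∘L T) f) f : ℂ) ≤ ‖(inner ℂ ((T ∘L T) f) f : ℂ)‖ :=
        RCLike.re_le_norm _
    _ ≤ ‖(T ∘L T) f‖ * ‖f‖ := norm_inner_le_norm _ _
    _ ≤ (‖T ∘L T‖ * ‖f‖) * ‖f‖ := by gcongr; exact (T ∘L T).le_opNorm f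
    _ = ‖T ∘L T‖ * ‖f‖ ^ 2 := by ring

/-- If `{(W i, v i)}` is a `(C,C')`-controlled fusion frame with bounds `A, B`
and `v i₀ ^ 2 * ‖C* π_{W i₀} C'‖ < A` for some `i₀`, then `{(W i, v i)}_{i ≠ i₀}` is a
`(C,C')`-controlled fusion frame with bounds `A - v i₀ ^ 2 * ‖C* π_{W i₀} C'‖` and `B`. -/
theorem stmt_7 {H : Type*} [NormedAddCommGroup H] [InnerProductSpace ℂ H] [CompleteSpace H]
    {ι : Type*} [Countable ι]
    (C C' : H →L[ℂ] H) (hC : IsUnit C) (hC' : IsUnit C')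
    (W : ι → Submodule ℂ H) [∀ i, CompleteSpace (W i)]
    (v : ι → ℝ) (hv : ∀ i, 0 < v i)
    (sq : ι → H →L[ℂ] H)
    (hGpos : ∀ i, (ctrlOp C C' (W i)).IsPositive)
    (hsq_pos : ∀ i, (sq i).IsPositive)
    (hsq_sq : ∀ i, sq i ∘L sq i = ctrlOp C C' (W i))
    (A B : ℝ) (hA : 0 < A) (hAB : A ≤ B)
    (hframe : ∀ f : H,
      Summable (fun i => v i ^ 2 * ‖sq i f‖ ^ 2) ∧
      A * ‖f‖ ^ 2 ≤ ∑' i, v i ^ 2 * ‖sq i f‖ ^ 2 ∧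
      (∑' i, v i ^ 2 * ‖sq i f‖ ^ 2) ≤ B * ‖f‖ ^ 2)
    (i₀ : ι) (hi₀ : v i₀ ^ 2 * ‖ctrlOp C C' (W i₀)‖ < A) :
    ∀ f : H,
      Summable (fun i : {i : ι // i ≠ i₀} => v i ^ 2 * ‖sq i f‖ ^ 2) ∧
      (A - v i₀ ^ 2 * ‖ctrlOp C C' (W i₀)‖) * ‖f‖ ^ 2 ≤
        ∑' i : {i : ι // i ≠ i₀}, v i ^ 2 * ‖sq i f‖ ^ 2 ∧
      (∑' i : {i : ι // i ≠ i₀}, v i ^ 2 * ‖sq i f‖ ^ 2) ≤ B * ‖f‖ ^ 2 := by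
  classical
  intro f
  obtain ⟨hsum, hlow, hup⟩ := hframe f
  set g : ι → ℝ := fun i => v i ^ 2 * ‖sq i f‖ ^ 2 with hg
  have hnn : ∀ i, 0 ≤ g i := fun i => by positivity
  have hsub : Summable (fun i : {i : ι // i ≠ i₀} => g i) := hsum.subtype {i | i ≠ i₀}
  -- the subtype tsum equals the tsum with the `i₀` term removed
  have heq : (∑' i : {i : ι // i ≠ i₀}, g i) = ∑' i, if i = i₀ then 0 else g i := by
    rw [show (∑' i : {i : ι // i ≠ i₀}, g i) = ∑' i : ({i | i ≠ i₀} : Set ι), g i from rfl,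
      tsum_subtype]
    congr 1
    funext i
    by_cases h : i = i₀ <;> simp [Set.indicator_apply, h]
  have htot : (∑' i, g i) = g i₀ + ∑' i, if i = i₀ then 0 else g i :=
    Summable.tsum_eq_add_tsum_ite hsum i₀
  -- bound on the removed term
  have hb : g i₀ ≤ v i₀ ^ 2 * ‖ctrlOp C C' (W i₀)‖ * ‖f‖ ^ 2 := by
    have h1 : ‖sq i₀ f‖ ^ 2 ≤ ‖ctrlOp C C' (W i₀)‖ * ‖f‖ ^ 2 := by
      have := stmt7_keylem (sq i₀) (hsq_pos i₀).isSelfAdjoint f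
      rwa [hsq_sq i₀] at this
    have hv2 : (0:ℝ) ≤ v i₀ ^ 2 := sq_nonneg _
    calc g i₀ = v i₀ ^ 2 * ‖sq i₀ f‖ ^ 2 := rfl
      _ ≤ v i₀ ^ 2 * (‖ctrlOp C C' (W i₀)‖ * ‖f‖ ^ 2) := by
          exact mul_le_mul_of_nonneg_left h1 hv2
      _ = v i₀ ^ 2 * ‖ctrlOp C C' (W i₀)‖ * ‖f‖ ^ 2 := by ring
  refine ⟨hsub, ?_, ?_⟩
  · rw [heq]; linarith
  · rw [heq]; linarith [hnn i₀]
end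

section
/- Let H be an n-dimensional complex Hilbert space (n < ∞) and let W = {(W_i, v_i)}_{i=1}^{m} be a Parseval (C,C')-controlled fusion frame for H (bounds A = B = 1), with C*π_{W_i}C' positive for every i. Then n ≤ ‖C‖ · ‖C'‖ · Σ_{i=1}^{m} v_i² · dim W_i. -/
open ContinuousLinearMap

lemma keyB {H : Type*} [NormedAddCommGroup H] [InnerProductSpace ℂ H] [CompleteSpace H]
    [FiniteDimensional ℂ H] (C C' : H →L[ℂ] H) (Wi : Submodule ℂ H)
    {ι : Type*} [Fintype ι] (e : OrthonormalBasis ι ℂ H) :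
    ∑ j, (inner ℂ (ctrlOp C C' Wi (e j)) (e j) : ℂ).re ≤ ‖C‖ * ‖C'‖ * (Module.finrank ℂ Wi) := by
  set d := Module.finrank ℂ Wi
  let f : OrthonormalBasis (Fin d) ℂ Wi := stdOrthonormalBasis ℂ Wi
  have key : ∑ j, (inner ℂ (ctrlOp C C' Wi (e j)) (e j) : ℂ)
      = ∑ k, (inner ℂ (ContinuousLinearMap.adjoint C (f k))
          (ContinuousLinearMap.adjoint C' (f k)) : ℂ) := by
    have h1 : ∀ j, (inner ℂ (ctrlOp C C' Wi (e j)) (e j) : ℂ)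
        = ∑ k, (inner ℂ (ContinuousLinearMap.adjoint C (f k)) (e j) : ℂ)
            * (inner ℂ (e j) (ContinuousLinearMap.adjoint C' (f k)) : ℂ) := by
      intro j
      have : (ctrlOp C C' Wi (e j)) = ContinuousLinearMap.adjoint C
          (Wi.subtypeL (Wi.orthogonalProjectionOnto (C' (e j)))) := rfl
      rw [this, adjoint_inner_left]
      rw [f.orthogonalProjectionOnto_apply_eq_sum (C' (e j))]
      rw [map_sum, sum_inner]
      refine Finset.sum_congr rfl fun k _ => ?_
      rw [map_smul, inner_smul_left, Submodule.subtypeL_apply,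
        inner_conj_symm, adjoint_inner_right, ← adjoint_inner_left C, mul_comm]
    simp_rw [h1]
    rw [Finset.sum_comm]
    congr 1
    ext k
    exact OrthonormalBasis.sum_inner_mul_inner e _ _
  have hre := congrArg Complex.re key
  rw [Complex.re_sum, Complex.re_sum] at hre
  rw [hre]
  have hbound : ∀ k : Fin d, (inner ℂ (ContinuousLinearMap.adjoint C (f k))
      (ContinuousLinearMap.adjoint C' (f k)) : ℂ).re ≤ ‖C‖ * ‖C'‖ := by
    intro k
    have h1 : ‖(f k : H)‖ = 1 := by
      have := f.orthonormal.1 k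
      exact this
    calc (inner ℂ (ContinuousLinearMap.adjoint C (f k))
        (ContinuousLinearMap.adjoint C' (f k)) : ℂ).re
        ≤ ‖(inner ℂ (ContinuousLinearMap.adjoint C (f k))
            (ContinuousLinearMap.adjoint C' (f k)) : ℂ)‖ := Complex.abs_re_le_norm _ |>.trans (le_of_eq rfl) |> le_trans (le_abs_self _)
      _ ≤ ‖ContinuousLinearMap.adjoint C (f k)‖ * ‖ContinuousLinearMap.adjoint C' (f k)‖ :=
          norm_inner_le_norm _ _
      _ ≤ ‖C‖ * ‖C'‖ := by
          have hC1 := (ContinuousLinearMap.adjoint C).le_opNorm ((f k : H))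
          have hC2 := (ContinuousLinearMap.adjoint C').le_opNorm ((f k : H))
          rw [h1, mul_one] at hC1 hC2
          have e1 : ‖ContinuousLinearMap.adjoint C‖ = ‖C‖ :=
            LinearIsometryEquiv.norm_map ContinuousLinearMap.adjoint C
          have e2 : ‖ContinuousLinearMap.adjoint C'‖ = ‖C'‖ :=
            LinearIsometryEquiv.norm_map ContinuousLinearMap.adjoint C'
          rw [e1] at hC1; rw [e2] at hC2
          exact mul_le_mul hC1 hC2 (norm_nonneg _) (norm_nonneg _)
  calc ∑ k : Fin d, (inner ℂ (ContinuousLinearMap.adjoint C (f k))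
        (ContinuousLinearMap.adjoint C' (f k)) : ℂ).re
      ≤ ∑ k : Fin d, ‖C‖ * ‖C'‖ := Finset.sum_le_sum fun k _ => hbound k
    _ = ‖C‖ * ‖C'‖ * d := by simp [mul_comm]

/-- If `{(W i, v i)}_{i=1}^m` is a Parseval `(C,C')`-controlled fusion frame
for an `n`-dimensional complex Hilbert space `H`, then
`n ≤ ‖C‖ * ‖C'‖ * ∑ i, v i ^ 2 * dim (W i)`. -/
theorem stmt_9 {H : Type*} [NormedAddCommGroup H] [InnerProductSpace ℂ H] [CompleteSpace H]
    [FiniteDimensional ℂ H] {n : ℕ} (hn : Module.finrank ℂ H = n)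
    {m : ℕ}
    (C C' : H →L[ℂ] H) (hC : IsUnit C) (hC' : IsUnit C')
    (W : Fin m → Submodule ℂ H)
    (v : Fin m → ℝ) (hv : ∀ i, 0 < v i)
    (sq : Fin m → H →L[ℂ] H)
    (hGpos : ∀ i, (ctrlOp C C' (W i)).IsPositive)
    (hsq_pos : ∀ i, (sq i).IsPositive)
    (hsq_sq : ∀ i, sq i ∘L sq i = ctrlOp C C' (W i))
    (hParseval : ∀ f : H, ∑ i, v i ^ 2 * ‖sq i f‖ ^ 2 = ‖f‖ ^ 2) :
    (n : ℝ) ≤ ‖C‖ * ‖C'‖ * ∑ i, v i ^ 2 * (Module.finrank ℂ (W i) : ℝ) := by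
  classical
  let e : OrthonormalBasis (Fin (Module.finrank ℂ H)) ℂ H := stdOrthonormalBasis ℂ H
  have hnorm : ∀ (i : Fin m) (x : H),
      ‖sq i x‖ ^ 2 = (inner ℂ (ctrlOp C C' (W i) x) x : ℂ).re := by
    intro i x
    have hx : (ctrlOp C C' (W i)) x = sq i (sq i x) := by
      rw [← hsq_sq i]; rfl
    have hsa : ContinuousLinearMap.adjoint (sq i) = sq i :=
      ((hsq_pos i).isSelfAdjoint : IsSelfAdjoint (sq i)).adjoint_eq
    have : (inner ℂ (ctrlOp C C' (W i) x) x : ℂ) = inner ℂ (sq i x) (sq i x) := by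
      rw [hx]
      conv_lhs => rw [show sq i (sq i x) = ContinuousLinearMap.adjoint (sq i) (sq i x) by
        rw [hsa]]
      rw [adjoint_inner_left]
    rw [this, inner_self_eq_norm_sq_to_K]
    simp [← Complex.ofReal_pow]
  have he1 : ∀ j, ‖e j‖ = 1 := fun j => e.orthonormal.1 j
  calc (n : ℝ) = ∑ j : Fin (Module.finrank ℂ H), ‖e j‖ ^ 2 := by
        simp [he1, hn]
    _ = ∑ j : Fin (Module.finrank ℂ H), ∑ i, v i ^ 2 * ‖sq i (e j)‖ ^ 2 := by
        simp [hParseval]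
    _ = ∑ i, v i ^ 2 * ∑ j : Fin (Module.finrank ℂ H),
          (inner ℂ (ctrlOp C C' (W i) (e j)) (e j) : ℂ).re := by
        rw [Finset.sum_comm]
        refine Finset.sum_congr rfl fun i _ => ?_
        rw [Finset.mul_sum]
        exact Finset.sum_congr rfl fun j _ => by rw [hnorm]
    _ ≤ ∑ i, v i ^ 2 * (‖C‖ * ‖C'‖ * (Module.finrank ℂ (W i) : ℝ)) := by
        refine Finset.sum_le_sum fun i _ => ?_
        exact mul_le_mul_of_nonneg_left (keyB C C' (W i) e) (sq_nonneg _)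
    _ = ‖C‖ * ‖C'‖ * ∑ i, v i ^ 2 * (Module.finrank ℂ (W i) : ℝ) := by
        rw [Finset.mul_sum]
        exact Finset.sum_congr rfl fun i _ => by ring
end
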